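/- Let n ≥ 2 and let f : 𝔽₂ⁿ → 𝔽₂ satisfy f(x) = ((|x|/2) mod 2) for every x ∈ 𝔽₂ⁿ of even Hamming weight |x|. For 1 ≤ i < j ≤ n define the degree-two algebraic normal form coefficient c_{ij}(f) := f(0) ⊕ f(eᵢ) ⊕ f(eⱼ) ⊕ f(eᵢ ⊕ eⱼ) ∈ 𝔽₂, where e_k denotes the k-th standard basis vector of 𝔽₂ⁿ. Then the number of pairs (i, j) with i < j and c_{ij}(f) = 1 is at least n(n − 2)/4; in particular every such f has Ω(n²) degree-two terms in its algebraic normal form. -/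
import Mathlib


open Finset

/-- Any Boolean function agreeing on even-weight inputs with the second least significant
bit of the Hamming weight has at least `n(n-2)/4` degree-two terms in its algebraic
normal form, where the ANF coefficient of `xᵢxⱼ` is the second finite difference
`f(0) ⊕ f(eᵢ) ⊕ f(eⱼ) ⊕ f(eᵢ ⊕ eⱼ)`. -/
theorem stmt_1 (n : ℕ) (hn : 2 ≤ n) (f : (Fin n → ZMod 2) → ZMod 2)
    (hf : ∀ x : Fin n → ZMod 2,
        Even ((univ.filter (fun i => x i = 1)).card) →
        f x = (((univ.filter (fun i => x i = 1)).card / 2 : ℕ) : ZMod 2)) :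
    n * (n - 2) / 4 ≤
      ((univ : Finset (Fin n × Fin n)).filter (fun p =>
          p.1 < p.2 ∧
            f 0 + f (Pi.single p.1 1) + f (Pi.single p.2 1)
              + f (Pi.single p.1 1 + Pi.single p.2 1) = 1)).card := by
  classical
  set g : Fin n → ZMod 2 := fun i => f (Pi.single i 1) with hg
  -- f 0 = 0
  have hset0 : (univ.filter (fun i : Fin n => (0 : Fin n → ZMod 2) i = 1)) = ∅ := by
    ext x; simp
  have hf0 : f 0 = 0 := by
    have h := hf 0 (by rw [hset0]; simp)
    rw [hset0] at h; simpa using h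
  -- f (e_i + e_j) = 1 for i ≠ j
  have hfij : ∀ i j : Fin n, i ≠ j → f (Pi.single i 1 + Pi.single j 1) = 1 := by
    intro i j hij
    have hset : (univ.filter (fun x : Fin n =>
        (Pi.single i 1 + Pi.single j 1 : Fin n → ZMod 2) x = 1)) = {i, j} := by
      ext x
      simp only [mem_filter, mem_univ, true_and, Pi.add_apply, Pi.single_apply,
        mem_insert, mem_singleton]
      rcases eq_or_ne x i with rfl | hxi
      · simp [hij]
      · rcases eq_or_ne x j with rfl | hxj
        · simp [hxi, hij]
        · simp [hxi, hxj]
    have hcard : (univ.filter (fun x : Fin n =>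
        (Pi.single i 1 + Pi.single j 1 : Fin n → ZMod 2) x = 1)).card = 2 := by
      rw [hset, card_insert_of_notMem (by simpa using hij), card_singleton]
    have h := hf _ (by rw [hcard]; exact even_two)
    rw [hcard] at h
    norm_num at h
    exact h
  have hiff : ∀ a b : ZMod 2, ((0 : ZMod 2) + a + b + 1 = 1) ↔ a = b := by decide
  -- rewrite the main set
  have hS : ((univ : Finset (Fin n × Fin n)).filter (fun p =>
          p.1 < p.2 ∧
            f 0 + f (Pi.single p.1 1) + f (Pi.single p.2 1)
              + f (Pi.single p.1 1 + Pi.single p.2 1) = 1)) =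
      (univ : Finset (Fin n × Fin n)).filter (fun p => p.1 < p.2 ∧ g p.1 = g p.2) := by
    ext p
    simp only [mem_filter, mem_univ, true_and]
    refine and_congr_right fun hlt => ?_
    rw [hf0, hfij _ _ hlt.ne]
    exact hiff _ _
  rw [hS]
  set U : Finset (Fin n × Fin n) :=
    (univ : Finset (Fin n × Fin n)).filter (fun p => p.1 < p.2 ∧ g p.1 = g p.2) with hU
  set V : Finset (Fin n × Fin n) :=
    (univ : Finset (Fin n × Fin n)).filter (fun p => p.2 < p.1 ∧ g p.1 = g p.2) with hV
  set O : Finset (Fin n × Fin n) :=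
    (univ : Finset (Fin n × Fin n)).filter (fun p => p.1 ≠ p.2 ∧ g p.1 = g p.2) with hO
  set A : Finset (Fin n) := univ.filter (fun i => g i = 0) with hA
  set B : Finset (Fin n) := univ.filter (fun i => g i = 1) with hB
  have h01 : ∀ a : ZMod 2, a = 0 ∨ a = 1 := by decide
  have hkm : A.card + B.card = n := by
    have h := Finset.card_filter_add_card_filter_not
      (s := (univ : Finset (Fin n))) (p := fun i => g i = 0)
    have hBeq : (univ : Finset (Fin n)).filter (fun i => ¬ g i = 0) = B := by
      ext x
      simp only [mem_filter, mem_univ, true_and, hB]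
      rcases h01 (g x) with h | h <;> simp [h]
    rw [hBeq] at h
    simpa using h
  -- O = A.offDiag ∪ B.offDiag
  have hOeq : O = A.offDiag ∪ B.offDiag := by
    ext p
    simp only [hO, mem_filter, mem_univ, true_and, mem_union, Finset.mem_offDiag,
      hA, hB]
    constructor
    · rintro ⟨hne, heq⟩
      rcases h01 (g p.1) with h | h
      · exact Or.inl ⟨by simp [h], by simp [← heq, h], hne⟩
      · exact Or.inr ⟨by simp [h], by simp [← heq, h], hne⟩
    · rintro (⟨h1, h2, h3⟩ | ⟨h1, h2, h3⟩) <;>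
        exact ⟨h3, by simp_all⟩
  have hdisj : Disjoint A.offDiag B.offDiag := by
    rw [Finset.disjoint_left]
    rintro p hp hq
    rw [Finset.mem_offDiag] at hp hq
    have h1 := hp.1; have h2 := hq.1
    simp only [hA, hB, mem_filter] at h1 h2
    rw [h1.2] at h2
    exact absurd h2.2 (by decide)
  have hOcard : O.card = (A.card * A.card - A.card) + (B.card * B.card - B.card) := by
    rw [hOeq, card_union_of_disjoint hdisj, Finset.offDiag_card, Finset.offDiag_card]
  -- O = U ∪ V, |V| = |U|
  have hOUV : O = U ∪ V := by
    ext p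
    simp only [hO, hU, hV, mem_filter, mem_univ, true_and, mem_union]
    constructor
    · rintro ⟨hne, heq⟩
      rcases lt_or_gt_of_ne hne with h | h
      · exact Or.inl ⟨h, heq⟩
      · exact Or.inr ⟨h, heq⟩
    · rintro (⟨h, heq⟩ | ⟨h, heq⟩)
      · exact ⟨h.ne, heq⟩
      · exact ⟨h.ne', heq⟩
  have hdisjUV : Disjoint U V := by
    rw [Finset.disjoint_left]
    rintro p hp hq
    simp only [hU, hV, mem_filter] at hp hq
    exact absurd hq.2.1 (not_lt.mpr hp.2.1.le)
  have hVU : V.card = U.card := by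
    have himg : V = U.image Prod.swap := by
      ext p
      simp only [hU, hV, mem_filter, mem_univ, true_and, mem_image]
      constructor
      · rintro ⟨h1, h2⟩
        exact ⟨p.swap, ⟨h1, h2.symm⟩, Prod.swap_swap p⟩
      · rintro ⟨q, hq, rfl⟩
        exact ⟨hq.1, hq.2.symm⟩
    rw [himg, card_image_of_injective _ Prod.swap_injective]
  have hO2U : O.card = 2 * U.card := by
    rw [hOUV, card_union_of_disjoint hdisjUV, hVU]; ring
  -- arithmetic
  set k := A.card
  set m := B.card
  have hk1 : k ≤ k * k := by
    rcases Nat.eq_zero_or_pos k with h | h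
    · simp [h]
    · calc k = k * 1 := by ring
        _ ≤ k * k := Nat.mul_le_mul_left k h
  have hm1 : m ≤ m * m := by
    rcases Nat.eq_zero_or_pos m with h | h
    · simp [h]
    · calc m = m * 1 := by ring
        _ ≤ m * m := Nat.mul_le_mul_left m h
  have main : n * (n - 2) ≤ 2 * ((k * k - k) + (m * m - m)) := by
    zify [hk1, hm1, hn]
    have hkmz : (k : ℤ) + m = n := by exact_mod_cast hkm
    nlinarith [sq_nonneg ((k : ℤ) - m)]
  have key : n * (n - 2) ≤ 4 * U.card := by
    calc n * (n - 2) ≤ 2 * ((k * k - k) + (m * m - m)) := main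
      _ = 2 * O.card := by rw [hOcard]
      _ = 4 * U.card := by rw [hO2U]; ring
  calc n * (n - 2) / 4 ≤ (4 * U.card) / 4 := Nat.div_le_div_right key
    _ = U.card := by omega
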